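/- For discrete probability measures μ, ν on a finite set X and nonnegative cost c, the map p ↦ W_{c^p}(μ,ν)^{1/p} is bounded below by α^{1/p} · W^{(∞)}_c(μ,ν) for all p ≥ 1, where α > 0 depends only on μ and ν; consequently lim inf_{p→∞} W_{c^p}(μ,ν)^{1/p} ≥ W^{(∞)}_c(μ,ν). -/

import Mathlib

open Finset

/-- A transportation plan between discrete measures `μ` and `ν`. -/
def IsPlan {X : Type*} [Fintype X] (μ ν : X → ℝ) (π : X → X → ℝ) : Prop :=
  (∀ x y, 0 ≤ π x y) ∧ (∀ x, ∑ y, π x y = μ x) ∧ (∀ y, ∑ x, π x y = ν y)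

/-- Total transport cost of a plan. -/
noncomputable def tcost {X : Type*} [Fintype X] (c π : X → X → ℝ) : ℝ :=
  ∑ x, ∑ y, c x y * π x y

open Classical in
/-- Support of a plan, as a finite set of pairs. -/
noncomputable def spt {X : Type*} [Fintype X] (π : X → X → ℝ) : Finset (X × X) :=
  Finset.univ.filter (fun p => π p.1 p.2 ≠ 0)

open Classical in
/-- Support of a discrete measure. -/
noncomputable def msupp {X : Type*} [Fintype X] (μ : X → ℝ) : Finset X :=
  Finset.univ.filter (fun x => μ x ≠ 0)

/-- An optimal transportation plan. -/
def IsOptimal {X : Type*} [Fintype X] (c : X → X → ℝ) (μ ν : X → ℝ) (π : X → X → ℝ) : Prop :=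
  IsPlan μ ν π ∧ ∀ π' : X → X → ℝ, IsPlan μ ν π' → tcost c π ≤ tcost c π'

/-- A trim plan: optimal with support of minimal cardinality among optimal plans. -/
def IsTrim {X : Type*} [Fintype X] (c : X → X → ℝ) (μ ν : X → ℝ) (π : X → X → ℝ) : Prop :=
  IsOptimal c μ ν π ∧
    ∀ π' : X → X → ℝ, IsOptimal c μ ν π' → (spt π).card ≤ (spt π').card

/-- `L^∞` norm of the cost with respect to a plan: max of `c` on the support. -/
noncomputable def linf {X : Type*} [Fintype X] (c π : X → X → ℝ) : ℝ :=
  WithBot.unbotD 0 (((spt π).image (fun p => c p.1 p.2)).max)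

/-- Optimal transport cost `W_c(μ,ν)`. -/
noncomputable def Wc {X : Type*} [Fintype X] (c : X → X → ℝ) (μ ν : X → ℝ) : ℝ :=
  sInf {r | ∃ π, IsPlan μ ν π ∧ tcost c π = r}

/-- Infinity-Wasserstein cost `W_c^{(∞)}(μ,ν)`. -/
noncomputable def Winf {X : Type*} [Fintype X] (c : X → X → ℝ) (μ ν : X → ℝ) : ℝ :=
  sInf {r | ∃ π, IsPlan μ ν π ∧ linf c π = r}

/-- The deterministic plan `(Id, h)_# σ`. -/
def pushF {X : Type*} [DecidableEq X] (h : X → X) (σ : X → ℝ) : X → X → ℝ :=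
  fun x y => if h x = y then σ x else 0

/-- The deterministic plan `(h, Id)_# σ`. -/
def pushB {X : Type*} [DecidableEq X] (h : X → X) (σ : X → ℝ) : X → X → ℝ :=
  fun x y => if h y = x then σ y else 0


section HallFrac
variable {X : Type*} [Fintype X]

set_option linter.unusedSectionVars false

open Classical in
/-- Neighborhood of a finset in the bipartite graph `G`. -/
noncomputable def NGs (G : X → X → Prop) (A : Finset X) : Finset X :=
  univ.filter (fun y => ∃ x ∈ A, G x y)

open Classical in
noncomputable def msuppF (μ : X → ℝ) : Finset X := univ.filter (fun x => μ x ≠ 0)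

lemma mem_NGs {G : X → X → Prop} {A : Finset X} {y : X} : y ∈ NGs G A ↔ ∃ x ∈ A, G x y := by
  classical simp [NGs]

lemma NGs_mono (G : X → X → Prop) {A B : Finset X} (h : A ⊆ B) : NGs G A ⊆ NGs G B := by
  intro y hy
  rw [mem_NGs] at *
  obtain ⟨x, hx, hG⟩ := hy
  exact ⟨x, h hx, hG⟩

lemma NGs_union [DecidableEq X] (G : X → X → Prop) (A B : Finset X) :
    NGs G (A ∪ B) = NGs G A ∪ NGs G B := by
  classical
  ext y
  simp only [mem_NGs, mem_union]
  constructor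
  · rintro ⟨x, hx | hx, hG⟩
    · exact Or.inl ⟨x, hx, hG⟩
    · exact Or.inr ⟨x, hx, hG⟩
  · rintro (⟨x, hx, hG⟩ | ⟨x, hx, hG⟩)
    · exact ⟨x, Or.inl hx, hG⟩
    · exact ⟨x, Or.inr hx, hG⟩

lemma mem_msuppF {μ : X → ℝ} {x : X} : x ∈ msuppF μ ↔ μ x ≠ 0 := by
  classical simp [msuppF]

lemma sum_update_sub [DecidableEq X] (f : X → ℝ) (x₀ : X) (ε : ℝ) (A : Finset X) :
    ∑ x ∈ A, Function.update f x₀ (f x₀ - ε) x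
      = ∑ x ∈ A, f x - (if x₀ ∈ A then ε else 0) := by
  by_cases h : x₀ ∈ A
  · rw [Finset.sum_update_of_mem h, if_pos h]
    have hA : A \ {x₀} = A.erase x₀ := by
      ext z; simp [Finset.mem_erase, and_comm]
    rw [hA, Finset.sum_erase_eq_sub h]
    ring
  · rw [Finset.sum_update_of_notMem h, if_neg h]
    ring

open Classical in
/-- The set of "qualifying strictly-slack" subsets. -/
noncomputable def Fq (μ ν : X → ℝ) (G : X → X → Prop) : Finset (Finset X) :=
  (univ : Finset X).powerset.filter (fun A =>
    (A ∩ msuppF μ).Nonempty ∧ ¬ msuppF μ ⊆ A ∧ ∑ x ∈ A, μ x < ∑ y ∈ NGs G A, ν y)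

noncomputable def msr (μ ν : X → ℝ) (G : X → X → Prop) : ℕ :=
  ((msuppF μ).card + (msuppF ν).card) * (2 ^ Fintype.card X + 1) + (Fq μ ν G).card

lemma Fq_card_lt (μ ν : X → ℝ) (G : X → X → Prop) :
    (Fq μ ν G).card < 2 ^ Fintype.card X + 1 := by
  classical
  have h1 : (Fq μ ν G).card ≤ (univ : Finset X).powerset.card := Finset.card_filter_le _ _
  have h2 : (univ : Finset X).powerset.card = 2 ^ Fintype.card X := by
    rw [Finset.card_powerset, Finset.card_univ]
  omega

lemma msr_lt_of_supp_lt {μ ν μ' ν' : X → ℝ} {G G' : X → X → Prop}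
    (h : (msuppF μ').card + (msuppF ν').card < (msuppF μ).card + (msuppF ν).card) :
    msr μ' ν' G' < msr μ ν G := by
  have ht := Fq_card_lt μ' ν' G'
  unfold msr
  set B := 2 ^ Fintype.card X + 1 with hB
  set s' := (msuppF μ').card + (msuppF ν').card
  set s := (msuppF μ).card + (msuppF ν).card
  calc s' * B + (Fq μ' ν' G').card < s' * B + B := by omega
    _ = (s' + 1) * B := by ring
    _ ≤ s * B := Nat.mul_le_mul_right B (by omega)
    _ ≤ s * B + (Fq μ ν G).card := Nat.le_add_right _ _

lemma hall_zero (μ ν : X → ℝ) (G : X → X → Prop) (hμ0 : ∀ x, μ x = 0)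
    (hν : ∀ y, 0 ≤ ν y) (hs : ∑ x, μ x = ∑ y, ν y) :
    ∃ π : X → X → ℝ, (∀ x y, 0 ≤ π x y) ∧ (∀ x, ∑ y, π x y = μ x) ∧
      (∀ y, ∑ x, π x y = ν y) ∧ (∀ x y, π x y ≠ 0 → G x y) := by
  have hνs : ∑ y, ν y = 0 := by rw [← hs]; simp [hμ0]
  have hν0 : ∀ y, ν y = 0 := fun y =>
    (Finset.sum_eq_zero_iff_of_nonneg (fun i _ => hν i)).mp hνs y (mem_univ y)
  exact ⟨fun _ _ => 0, fun _ _ => le_refl 0, fun x => by simp [hμ0 x],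
    fun y => by simp [hν0 y], fun x y h => absurd rfl h⟩

lemma sum_if_mem [DecidableEq X] (C S : Finset X) (f : X → ℝ) :
    ∑ x ∈ C, (if x ∈ S then f x else 0) = ∑ x ∈ C ∩ S, f x := by
  classical exact Finset.sum_ite_mem C S f

lemma sum_if_not_mem [DecidableEq X] (C S : Finset X) (f : X → ℝ) :
    ∑ x ∈ C, (if x ∈ S then 0 else f x) = ∑ x ∈ C \ S, f x := by
  classical
  rw [Finset.sdiff_eq_filter, Finset.sum_filter]
  exact Finset.sum_congr rfl fun x _ => by by_cases h : x ∈ S <;> simp [h]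

lemma frac_hall_aux :
    ∀ (n : ℕ) (μ ν : X → ℝ) (G : X → X → Prop), msr μ ν G ≤ n →
    (∀ x, 0 ≤ μ x) → (∀ y, 0 ≤ ν y) → (∑ x, μ x = ∑ y, ν y) →
    (∀ A : Finset X, ∑ x ∈ A, μ x ≤ ∑ y ∈ NGs G A, ν y) →
    ∃ π : X → X → ℝ, (∀ x y, 0 ≤ π x y) ∧ (∀ x, ∑ y, π x y = μ x) ∧
      (∀ y, ∑ x, π x y = ν y) ∧ (∀ x y, π x y ≠ 0 → G x y) := by
  classical
  intro n
  induction n with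
  | zero =>
    intro μ ν G hm hμ hν hs hH
    refine hall_zero μ ν G (fun x => ?_) hν hs
    by_contra hx
    have hxs : x ∈ msuppF μ := mem_msuppF.mpr hx
    have h1 : 1 ≤ (msuppF μ).card := Finset.card_pos.mpr ⟨x, hxs⟩
    have hpos : 0 < msr μ ν G := by
      unfold msr
      exact lt_of_lt_of_le (Nat.mul_pos (by omega) (Nat.succ_pos _)) (Nat.le_add_right _ _)
    omega
  | succ n ih =>
    intro μ ν G hm hμ hν hs hH
    by_cases hsupp : (msuppF μ).Nonempty
    swap
    · refine hall_zero μ ν G (fun x => ?_) hν hs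
      by_contra hx
      exact hsupp ⟨x, mem_msuppF.mpr hx⟩
    by_cases hT : ∃ A : Finset X, (A ∩ msuppF μ).Nonempty ∧ ¬ msuppF μ ⊆ A ∧
        ∑ x ∈ A, μ x = ∑ y ∈ NGs G A, ν y
    · -- Case (a): split along a tight set
      obtain ⟨A₀, hA₀ne, hA₀nsub, hA₀tight⟩ := hT
      set A : Finset X := A₀ ∩ msuppF μ with hAdef
      have hA_sub : A ⊆ msuppF μ := inter_subset_right
      have hAA₀ : A ⊆ A₀ := inter_subset_left
      have hμA : ∑ x ∈ A, μ x = ∑ x ∈ A₀, μ x := by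
        refine Finset.sum_subset hAA₀ (fun x hx0 hxA => ?_)
        by_contra hne
        exact hxA (mem_inter.mpr ⟨hx0, mem_msuppF.mpr hne⟩)
      have hNA_sub : NGs G A ⊆ NGs G A₀ := NGs_mono G hAA₀
      have htA : ∑ x ∈ A, μ x = ∑ y ∈ NGs G A, ν y := by
        refine le_antisymm (hH A) ?_
        calc ∑ y ∈ NGs G A, ν y ≤ ∑ y ∈ NGs G A₀, ν y :=
              Finset.sum_le_sum_of_subset_of_nonneg hNA_sub (fun y _ _ => hν y)
          _ = ∑ x ∈ A₀, μ x := hA₀tight.symm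
          _ = ∑ x ∈ A, μ x := hμA.symm
      have hAne : A.Nonempty := hA₀ne
      obtain ⟨x₁, hx₁supp, hx₁A₀⟩ := Finset.not_subset.mp hA₀nsub
      have hx₁A : x₁ ∉ A := fun h => hx₁A₀ (hAA₀ h)
      -- subproblem measures
      set μ₁ : X → ℝ := fun x => if x ∈ A then μ x else 0 with hμ₁def
      set ν₁ : X → ℝ := fun y => if y ∈ NGs G A then ν y else 0 with hν₁def
      set μ₂ : X → ℝ := fun x => if x ∈ A then 0 else μ x with hμ₂def
      set ν₂ : X → ℝ := fun y => if y ∈ NGs G A then 0 else ν y with hν₂def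
      set G₂ : X → X → Prop := fun x y => G x y ∧ y ∉ NGs G A with hG₂def
      have hsuppμ₁ : msuppF μ₁ = A := by
        ext x
        rw [mem_msuppF]
        by_cases hx : x ∈ A
        · simp only [hμ₁def, if_pos hx]
          exact ⟨fun _ => hx, fun _ => mem_msuppF.mp (hA_sub hx)⟩
        · simp [hμ₁def, hx]
      have hsuppν₁ : msuppF ν₁ ⊆ msuppF ν := by
        intro y hy
        rw [mem_msuppF] at *
        by_cases h : y ∈ NGs G A
        · simpa [hν₁def, h] using hy
        · simp [hν₁def, h] at hy
      have hsuppμ₂ : msuppF μ₂ = msuppF μ \ A := by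
        ext x
        rw [mem_msuppF, mem_sdiff, mem_msuppF]
        by_cases hx : x ∈ A <;> simp [hμ₂def, hx]
      have hsuppν₂ : msuppF ν₂ ⊆ msuppF ν := by
        intro y hy
        rw [mem_msuppF] at *
        by_cases h : y ∈ NGs G A
        · simp [hν₂def, h] at hy
        · simpa [hν₂def, h] using hy
      have hcard1 : (msuppF μ₁).card < (msuppF μ).card := by
        rw [hsuppμ₁]
        exact Finset.card_lt_card ((Finset.ssubset_iff_of_subset hA_sub).mpr
          ⟨x₁, hx₁supp, hx₁A⟩)
      have hcard2 : (msuppF μ₂).card < (msuppF μ).card := by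
        rw [hsuppμ₂]
        obtain ⟨a, ha⟩ := hAne
        refine Finset.card_lt_card ((Finset.ssubset_iff_of_subset sdiff_subset).mpr
          ⟨a, hA_sub ha, ?_⟩)
        simp [ha]
      have hmsr1 : msr μ₁ ν₁ G ≤ n := by
        have := msr_lt_of_supp_lt (μ := μ) (ν := ν) (μ' := μ₁) (ν' := ν₁) (G := G) (G' := G)
          (by have := Finset.card_le_card hsuppν₁; omega)
        omega
      have hmsr2 : msr μ₂ ν₂ G₂ ≤ n := by
        have := msr_lt_of_supp_lt (μ := μ) (ν := ν) (μ' := μ₂) (ν' := ν₂) (G := G) (G' := G₂)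
          (by have := Finset.card_le_card hsuppν₂; omega)
        omega
      -- Hall for subproblem 1
      have hH1 : ∀ C : Finset X, ∑ x ∈ C, μ₁ x ≤ ∑ y ∈ NGs G C, ν₁ y := by
        intro C
        have e1 : ∑ x ∈ C, μ₁ x = ∑ x ∈ C ∩ A, μ x := sum_if_mem C A μ
        have e2 : ∑ y ∈ NGs G C, ν₁ y = ∑ y ∈ NGs G C ∩ NGs G A, ν y :=
          sum_if_mem (NGs G C) (NGs G A) ν
        rw [e1, e2]
        calc ∑ x ∈ C ∩ A, μ x ≤ ∑ y ∈ NGs G (C ∩ A), ν y := hH _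
          _ ≤ ∑ y ∈ NGs G C ∩ NGs G A, ν y := by
            refine Finset.sum_le_sum_of_subset_of_nonneg ?_ (fun y _ _ => hν y)
            intro y hy
            exact mem_inter.mpr ⟨NGs_mono G inter_subset_left hy,
              NGs_mono G inter_subset_right hy⟩
      have hs1 : ∑ x, μ₁ x = ∑ y, ν₁ y := by
        have e1 : ∑ x, μ₁ x = ∑ x ∈ A, μ x := by
          rw [sum_if_mem univ A μ, univ_inter]
        have e2 : ∑ y, ν₁ y = ∑ y ∈ NGs G A, ν y := by
          rw [sum_if_mem univ (NGs G A) ν, univ_inter]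
        rw [e1, e2, htA]
      -- Hall for subproblem 2
      have hNG2 : ∀ C : Finset X, NGs G₂ C = NGs G C \ NGs G A := by
        intro C
        ext y
        simp only [mem_NGs, mem_sdiff, hG₂def]
        constructor
        · rintro ⟨x, hx, hG, hy⟩
          exact ⟨⟨x, hx, hG⟩, hy⟩
        · rintro ⟨⟨x, hx, hG⟩, hy⟩
          exact ⟨x, hx, hG, hy⟩
      have hH2 : ∀ C : Finset X, ∑ x ∈ C, μ₂ x ≤ ∑ y ∈ NGs G₂ C, ν₂ y := by
        intro C
        have e1 : ∑ x ∈ C, μ₂ x = ∑ x ∈ C \ A, μ x := sum_if_not_mem C A μ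
        have e2 : ∑ y ∈ NGs G₂ C, ν₂ y = ∑ y ∈ NGs G C \ NGs G A, ν y := by
          rw [hNG2 C]
          refine Finset.sum_congr rfl fun y hy => ?_
          rw [mem_sdiff] at hy
          simp [hν₂def, hy.2]
        rw [e1, e2]
        have key : ∑ x ∈ C \ A, μ x + ∑ x ∈ A, μ x ≤
            ∑ y ∈ NGs G (C \ A) \ NGs G A, ν y + ∑ y ∈ NGs G A, ν y := by
          calc ∑ x ∈ C \ A, μ x + ∑ x ∈ A, μ x = ∑ x ∈ (C \ A) ∪ A, μ x :=
                (Finset.sum_union (Finset.sdiff_disjoint)).symm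
            _ ≤ ∑ y ∈ NGs G ((C \ A) ∪ A), ν y := hH _
            _ = ∑ y ∈ NGs G (C \ A) ∪ NGs G A, ν y := by rw [NGs_union]
            _ = ∑ y ∈ (NGs G (C \ A) \ NGs G A) ∪ NGs G A, ν y := by
                rw [Finset.sdiff_union_self_eq_union]
            _ = ∑ y ∈ NGs G (C \ A) \ NGs G A, ν y + ∑ y ∈ NGs G A, ν y :=
                Finset.sum_union (Finset.sdiff_disjoint)
        have hmono : ∑ y ∈ NGs G (C \ A) \ NGs G A, ν y ≤ ∑ y ∈ NGs G C \ NGs G A, ν y := by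
          refine Finset.sum_le_sum_of_subset_of_nonneg ?_ (fun y _ _ => hν y)
          exact Finset.sdiff_subset_sdiff (NGs_mono G sdiff_subset) (le_refl _)
        rw [htA] at key
        linarith
      have hs2 : ∑ x, μ₂ x = ∑ y, ν₂ y := by
        have e1 : ∑ x, μ₂ x = ∑ x ∈ univ \ A, μ x := sum_if_not_mem univ A μ
        have e2 : ∑ y, ν₂ y = ∑ y ∈ univ \ NGs G A, ν y := sum_if_not_mem univ (NGs G A) ν
        rw [e1, e2, Finset.sum_sdiff_eq_sub (subset_univ _),
          Finset.sum_sdiff_eq_sub (subset_univ _), hs, htA]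
      have hμ₁n : ∀ x, 0 ≤ μ₁ x := fun x => by
        by_cases h : x ∈ A <;> simp [hμ₁def, h, hμ x]
      have hν₁n : ∀ y, 0 ≤ ν₁ y := fun y => by
        by_cases h : y ∈ NGs G A <;> simp [hν₁def, h, hν y]
      have hμ₂n : ∀ x, 0 ≤ μ₂ x := fun x => by
        by_cases h : x ∈ A <;> simp [hμ₂def, h, hμ x]
      have hν₂n : ∀ y, 0 ≤ ν₂ y := fun y => by
        by_cases h : y ∈ NGs G A <;> simp [hν₂def, h, hν y]
      obtain ⟨π₁, hπ₁n, hπ₁r, hπ₁c, hπ₁s⟩ := ih μ₁ ν₁ G hmsr1 hμ₁n hν₁n hs1 hH1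
      obtain ⟨π₂, hπ₂n, hπ₂r, hπ₂c, hπ₂s⟩ := ih μ₂ ν₂ G₂ hmsr2 hμ₂n hν₂n hs2 hH2
      refine ⟨fun x y => π₁ x y + π₂ x y, fun x y => add_nonneg (hπ₁n x y) (hπ₂n x y),
        fun x => ?_, fun y => ?_, fun x y h => ?_⟩
      · rw [Finset.sum_add_distrib, hπ₁r x, hπ₂r x]
        by_cases h : x ∈ A <;> simp [hμ₁def, hμ₂def, h]
      · rw [Finset.sum_add_distrib, hπ₁c y, hπ₂c y]
        by_cases h : y ∈ NGs G A <;> simp [hν₁def, hν₂def, h]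
      · by_cases h1 : π₁ x y = 0
        · have h2 : π₂ x y ≠ 0 := fun h2 => h (by show π₁ x y + π₂ x y = 0; rw [h1, h2, add_zero])
          exact (hπ₂s x y h2).1
        · exact hπ₁s x y h1
    · -- Case (b): route mass along one edge
      obtain ⟨x₀, hx₀⟩ := hsupp
      have hμx₀ : 0 < μ x₀ := lt_of_le_of_ne (hμ x₀) (Ne.symm (mem_msuppF.mp hx₀))
      have hx₀H : μ x₀ ≤ ∑ y ∈ NGs G {x₀}, ν y := by
        have := hH {x₀}
        simpa using this
      have hy₀ex : ∃ y₀ ∈ NGs G {x₀}, 0 < ν y₀ := by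
        by_contra h
        push_neg at h
        have : ∑ y ∈ NGs G {x₀}, ν y = 0 :=
          Finset.sum_eq_zero fun y hy => le_antisymm (h y hy) (hν y)
        rw [this] at hx₀H
        linarith
      obtain ⟨y₀, hy₀mem, hνy₀⟩ := hy₀ex
      have hGxy : G x₀ y₀ := by
        obtain ⟨x, hx, hG⟩ := mem_NGs.mp hy₀mem
        rwa [mem_singleton.mp hx] at hG
      set slack : Finset X → ℝ := fun B => ∑ y ∈ NGs G B, ν y - ∑ x ∈ B, μ x with hslackdef
      set Q₀ : Finset (Finset X) := (univ : Finset X).powerset.filter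
        (fun B => x₀ ∉ B ∧ (B ∩ msuppF μ).Nonempty ∧ y₀ ∈ NGs G B) with hQ₀def
      set T : Finset ℝ := insert (μ x₀) (insert (ν y₀) (Q₀.image slack)) with hTdef
      have hTne : T.Nonempty := ⟨μ x₀, mem_insert_self _ _⟩
      set ε : ℝ := T.min' hTne with hεdef
      have hQpos : ∀ B ∈ Q₀, 0 < slack B := by
        intro B hB
        rw [hQ₀def, mem_filter] at hB
        obtain ⟨-, hx₀B, hBne, -⟩ := hB
        have hnsub : ¬ msuppF μ ⊆ B := fun h => hx₀B (h hx₀)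
        have hne : ∑ x ∈ B, μ x ≠ ∑ y ∈ NGs G B, ν y := by
          intro h
          exact hT ⟨B, hBne, hnsub, h⟩
        have h2 := hH B
        have h3 : ∑ x ∈ B, μ x < ∑ y ∈ NGs G B, ν y := lt_of_le_of_ne h2 hne
        show (0:ℝ) < ∑ y ∈ NGs G B, ν y - ∑ x ∈ B, μ x
        linarith
      have hTall : ∀ r ∈ T, (0:ℝ) < r := by
        intro r hr
        rw [hTdef] at hr
        rcases mem_insert.mp hr with h | hr2
        · rw [h]; exact hμx₀
        rcases mem_insert.mp hr2 with h | hr3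
        · rw [h]; exact hνy₀
        · obtain ⟨B, hB, hBe⟩ := mem_image.mp hr3
          rw [← hBe]; exact hQpos B hB
      have hεT : ε ∈ T := Finset.min'_mem T hTne
      have hεpos : 0 < ε := hTall ε hεT
      have hεμ : ε ≤ μ x₀ := Finset.min'_le T _ (by rw [hTdef]; exact mem_insert_self _ _)
      have hεν : ε ≤ ν y₀ := Finset.min'_le T _
        (by rw [hTdef]; exact mem_insert_of_mem (mem_insert_self _ _))
      have hεQ : ∀ B ∈ Q₀, ε ≤ slack B := fun B hB => Finset.min'_le T _
        (by rw [hTdef]; exact mem_insert_of_mem (mem_insert_of_mem (mem_image_of_mem slack hB)))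
      set μ' : X → ℝ := Function.update μ x₀ (μ x₀ - ε) with hμ'def
      set ν' : X → ℝ := Function.update ν y₀ (ν y₀ - ε) with hν'def
      have hμ'sum : ∀ A : Finset X, ∑ x ∈ A, μ' x = ∑ x ∈ A, μ x - (if x₀ ∈ A then ε else 0) :=
        fun A => sum_update_sub μ x₀ ε A
      have hν'sum : ∀ A : Finset X, ∑ y ∈ A, ν' y = ∑ y ∈ A, ν y - (if y₀ ∈ A then ε else 0) :=
        fun A => sum_update_sub ν y₀ ε A
      have hμ'n : ∀ x, 0 ≤ μ' x := by
        intro x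
        by_cases h : x = x₀
        · rw [hμ'def, h, Function.update_self]; linarith
        · rw [hμ'def, Function.update_of_ne h]; exact hμ x
      have hν'n : ∀ y, 0 ≤ ν' y := by
        intro y
        by_cases h : y = y₀
        · rw [hν'def, h, Function.update_self]; linarith
        · rw [hν'def, Function.update_of_ne h]; exact hν y
      have hs' : ∑ x, μ' x = ∑ y, ν' y := by
        rw [hμ'sum, hν'sum, if_pos (mem_univ x₀), if_pos (mem_univ y₀), hs]
      have hH' : ∀ A : Finset X, ∑ x ∈ A, μ' x ≤ ∑ y ∈ NGs G A, ν' y := by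
        intro A
        rw [hμ'sum, hν'sum]
        by_cases hxA : x₀ ∈ A
        · have hyNA : y₀ ∈ NGs G A := mem_NGs.mpr ⟨x₀, hxA, hGxy⟩
          rw [if_pos hxA, if_pos hyNA]
          have := hH A
          linarith
        · rw [if_neg hxA]
          by_cases hyNA : y₀ ∈ NGs G A
          · rw [if_pos hyNA]
            by_cases hAs : (A ∩ msuppF μ).Nonempty
            · have hQ : A ∈ Q₀ := by
                rw [hQ₀def, mem_filter]
                exact ⟨mem_powerset.mpr (subset_univ _), hxA, hAs, hyNA⟩
              have hsl : ε ≤ ∑ y ∈ NGs G A, ν y - ∑ x ∈ A, μ x := hεQ A hQ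
              linarith
            · have hz : ∑ x ∈ A, μ x = 0 := by
                refine Finset.sum_eq_zero fun x hx => ?_
                by_contra hne
                exact hAs ⟨x, mem_inter.mpr ⟨hx, mem_msuppF.mpr hne⟩⟩
              have hyb : ν y₀ ≤ ∑ y ∈ NGs G A, ν y :=
                Finset.single_le_sum (fun y _ => hν y) hyNA
              linarith
          · rw [if_neg hyNA]
            have := hH A
            linarith
      have hsuppμ' : msuppF μ' ⊆ msuppF μ := by
        intro x hx
        rw [mem_msuppF] at *
        by_cases h : x = x₀
        · rw [h]; exact ne_of_gt hμx₀
        · rw [hμ'def, Function.update_of_ne h] at hx; exact hx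
      have hsuppν' : msuppF ν' ⊆ msuppF ν := by
        intro y hy
        rw [mem_msuppF] at *
        by_cases h : y = y₀
        · rw [h]; exact ne_of_gt hνy₀
        · rw [hν'def, Function.update_of_ne h] at hy; exact hy
      -- the measure decreases
      have hrec : msr μ' ν' G ≤ n := by
        have hmem : ε ∈ T := Finset.min'_mem T hTne
        rw [hTdef] at hmem
        have hcard_le1 : (msuppF μ').card ≤ (msuppF μ).card := Finset.card_le_card hsuppμ'
        have hcard_le2 : (msuppF ν').card ≤ (msuppF ν).card := Finset.card_le_card hsuppν'
        rcases mem_insert.mp hmem with hε1 | hmem2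
        · -- ε = μ x₀ : the atom x₀ dies
          have hx₀out : x₀ ∉ msuppF μ' := by
            rw [mem_msuppF, hμ'def, Function.update_self]
            simp [← hε1]
          have : msuppF μ' ⊂ msuppF μ := ⟨hsuppμ', fun h => hx₀out (h hx₀)⟩
          have hlt := Finset.card_lt_card this
          have := msr_lt_of_supp_lt (μ := μ) (ν := ν) (μ' := μ') (ν' := ν') (G := G) (G' := G)
            (by omega)
          omega
        rcases mem_insert.mp hmem2 with hε2 | hmem3
        · -- ε = ν y₀ : the atom y₀ dies
          have hy₀in : y₀ ∈ msuppF ν := mem_msuppF.mpr (ne_of_gt hνy₀)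
          have hy₀out : y₀ ∉ msuppF ν' := by
            rw [mem_msuppF, hν'def, Function.update_self]
            simp [← hε2]
          have : msuppF ν' ⊂ msuppF ν := ⟨hsuppν', fun h => hy₀out (h hy₀in)⟩
          have hlt := Finset.card_lt_card this
          have := msr_lt_of_supp_lt (μ := μ) (ν := ν) (μ' := μ') (ν' := ν') (G := G) (G' := G)
            (by omega)
          omega
        · -- ε = slack of some qualifying set: the count of slack sets drops
          obtain ⟨Astar, hAstarQ, hAstare⟩ := mem_image.mp hmem3
          by_cases hcard : (msuppF μ').card + (msuppF ν').card
              < (msuppF μ).card + (msuppF ν).card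
          · have := msr_lt_of_supp_lt (μ := μ) (ν := ν) (μ' := μ') (ν' := ν') (G := G)
              (G' := G) hcard
            omega
          · have e1 : msuppF μ' = msuppF μ :=
              Finset.eq_of_subset_of_card_le hsuppμ' (by omega)
            have e2 : msuppF ν' = msuppF ν :=
              Finset.eq_of_subset_of_card_le hsuppν' (by omega)
            rw [hQ₀def, mem_filter] at hAstarQ
            obtain ⟨-, hx₀As, hAsne, hy₀As⟩ := hAstarQ
            have hFsub : Fq μ' ν' G ⊆ Fq μ ν G := by
              intro B hB
              rw [Fq, mem_filter] at hB ⊢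
              obtain ⟨hBp, hBne, hBnsub, hBslack⟩ := hB
              rw [e1] at hBne hBnsub
              refine ⟨hBp, hBne, hBnsub, ?_⟩
              rw [hμ'sum, hν'sum] at hBslack
              by_cases hxB : x₀ ∈ B
              · have hyNB : y₀ ∈ NGs G B := mem_NGs.mpr ⟨x₀, hxB, hGxy⟩
                rw [if_pos hxB, if_pos hyNB] at hBslack
                linarith
              · rw [if_neg hxB] at hBslack
                by_cases hyNB : y₀ ∈ NGs G B
                · rw [if_pos hyNB] at hBslack; linarith
                · rw [if_neg hyNB] at hBslack; linarith
            have hAsF : Astar ∈ Fq μ ν G := by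
              rw [Fq, mem_filter]
              refine ⟨mem_powerset.mpr (subset_univ _), hAsne,
                fun h => hx₀As (h hx₀), ?_⟩
              have hsl : (0:ℝ) < ∑ y ∈ NGs G Astar, ν y - ∑ x ∈ Astar, μ x :=
                hQpos Astar (by
                  rw [hQ₀def, mem_filter]
                  exact ⟨mem_powerset.mpr (subset_univ _), hx₀As, hAsne, hy₀As⟩)
              linarith
            have hAsF' : Astar ∉ Fq μ' ν' G := by
              rw [Fq, mem_filter]
              push_neg
              intro _ _ _
              rw [hμ'sum, hν'sum, if_neg hx₀As, if_pos hy₀As]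
              have hAstare' : ∑ y ∈ NGs G Astar, ν y - ∑ x ∈ Astar, μ x = ε := hAstare
              linarith
            have hss : Fq μ' ν' G ⊂ Fq μ ν G := ⟨hFsub, fun h => hAsF' (h hAsF)⟩
            have hltF := Finset.card_lt_card hss
            have h1 : (msuppF μ').card = (msuppF μ).card := by rw [e1]
            have h2 : (msuppF ν').card = (msuppF ν).card := by rw [e2]
            unfold msr at hm ⊢
            rw [h1, h2]
            omega
      obtain ⟨π', hπ'n, hπ'r, hπ'c, hπ's⟩ := ih μ' ν' G hrec hμ'n hν'n hs' hH'
      set δ : X → X → ℝ := fun x y => if x = x₀ then (if y = y₀ then ε else 0) else 0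
        with hδdef
      have hδrow : ∀ x, ∑ y, δ x y = if x = x₀ then ε else 0 := by
        intro x
        by_cases h : x = x₀ <;> simp [hδdef, h]
      have hδcol : ∀ y, ∑ x, δ x y = if y = y₀ then ε else 0 := by
        intro y
        by_cases h : y = y₀ <;> simp [hδdef, h]
      refine ⟨fun x y => π' x y + δ x y, fun x y => ?_, fun x => ?_, fun y => ?_,
        fun x y h => ?_⟩
      · refine add_nonneg (hπ'n x y) ?_
        rw [hδdef]
        by_cases h1 : x = x₀ <;> by_cases h2 : y = y₀ <;> simp [h1, h2] <;> linarith
      · rw [Finset.sum_add_distrib, hπ'r x, hδrow x]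
        by_cases h : x = x₀
        · rw [if_pos h, h, hμ'def, Function.update_self]; ring
        · rw [if_neg h, hμ'def, Function.update_of_ne h]; ring
      · rw [Finset.sum_add_distrib, hπ'c y, hδcol y]
        by_cases h : y = y₀
        · rw [if_pos h, h, hν'def, Function.update_self]; ring
        · rw [if_neg h, hν'def, Function.update_of_ne h]; ring
      · by_cases h1 : π' x y = 0
        · have h2 : δ x y ≠ 0 := fun h2 => h (by show π' x y + δ x y = 0; rw [h1, h2, add_zero])
          rw [hδdef] at h2
          by_cases hx : x = x₀
          · by_cases hy : y = y₀
            · rw [hx, hy]; exact hGxy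
            · simp [hx, hy] at h2
          · simp [hx] at h2
        · exact hπ's x y h1

/-- Fractional Hall theorem. -/
lemma frac_hall (μ ν : X → ℝ) (G : X → X → Prop)
    (hμ : ∀ x, 0 ≤ μ x) (hν : ∀ y, 0 ≤ ν y) (hs : ∑ x, μ x = ∑ y, ν y)
    (hH : ∀ A : Finset X, ∑ x ∈ A, μ x ≤ ∑ y ∈ NGs G A, ν y) :
    ∃ π : X → X → ℝ, (∀ x y, 0 ≤ π x y) ∧ (∀ x, ∑ y, π x y = μ x) ∧
      (∀ y, ∑ x, π x y = ν y) ∧ (∀ x y, π x y ≠ 0 → G x y) :=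
  frac_hall_aux (msr μ ν G) μ ν G (le_refl _) hμ hν hs hH

end HallFrac

section MainAux
variable {X : Type*} [Fintype X]

lemma isPlan_prod (μ ν : X → ℝ) (hμ : ∀ x, 0 ≤ μ x) (hν : ∀ y, 0 ≤ ν y)
    (hμ1 : ∑ x, μ x = 1) (hν1 : ∑ y, ν y = 1) :
    IsPlan μ ν (fun x y => μ x * ν y) :=
  ⟨fun x y => mul_nonneg (hμ x) (hν y),
   fun x => by rw [← Finset.mul_sum, hν1, mul_one],
   fun y => by rw [← Finset.sum_mul, hμ1, one_mul]⟩

lemma tcost_nonneg' {c π : X → X → ℝ} (hc : ∀ x y, 0 ≤ c x y) (hπ : ∀ x y, 0 ≤ π x y) :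
    0 ≤ tcost c π :=
  Finset.sum_nonneg fun x _ => Finset.sum_nonneg fun y _ => mul_nonneg (hc x y) (hπ x y)

lemma linf_nonneg' {c : X → X → ℝ} (hc : ∀ x y, 0 ≤ c x y) (π : X → X → ℝ) :
    0 ≤ linf c π := by
  unfold linf
  rcases hS : (((spt π).image (fun p => c p.1 p.2)).max) with _ | v
  · rw [hS]; exact le_refl _
  · have hv : v ∈ (spt π).image (fun p => c p.1 p.2) := Finset.mem_of_max hS
    obtain ⟨q, _, rfl⟩ := Finset.mem_image.mp hv
    rw [hS]
    exact hc q.1 q.2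

lemma linf_le' {c π : X → X → ℝ} {t : ℝ} (ht : 0 ≤ t)
    (hb : ∀ x y, π x y ≠ 0 → c x y ≤ t) : linf c π ≤ t := by
  unfold linf
  rcases hS : (((spt π).image (fun p => c p.1 p.2)).max) with _ | v
  · rw [hS]; exact ht
  · have hv : v ∈ (spt π).image (fun p => c p.1 p.2) := Finset.mem_of_max hS
    obtain ⟨q, hq, rfl⟩ := Finset.mem_image.mp hv
    have hne : π q.1 q.2 ≠ 0 := by
      classical
      have := Finset.mem_filter.mp hq
      exact this.2
    rw [hS]
    exact hb q.1 q.2 hne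

/-- The key estimate: for any plan `π` and `p ≥ 1`,
`α · Winf^p ≤ tcost (c^p) π`. -/
lemma key_bound (μ ν : X → ℝ) (c : X → X → ℝ)
    (hμpos : ∀ x, 0 < μ x) (hνpos : ∀ y, 0 < ν y)
    (hμ1 : ∑ x, μ x = 1) (hν1 : ∑ y, ν y = 1)
    (hc : ∀ x y, 0 ≤ c x y) (α : ℝ)
    (hα : α = sInf {r | ∃ A B : Finset X,
      r = |∑ x ∈ A, μ x - ∑ y ∈ B, ν y| ∧ 0 < r})
    (hαpos : 0 < α) (p : ℝ) (hp : 1 ≤ p)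
    (π : X → X → ℝ) (hπ : IsPlan μ ν π) :
    α * (Winf c μ ν) ^ p ≤ tcost (fun x y => c x y ^ p) π := by
  classical
  obtain ⟨hπn, hπr, hπc⟩ := hπ
  have hp0 : (0:ℝ) < p := lt_of_lt_of_le one_pos hp
  have hplan0 : IsPlan μ ν (fun x y => μ x * ν y) :=
    isPlan_prod μ ν (fun x => (hμpos x).le) (fun y => (hνpos y).le) hμ1 hν1
  have hW0 : 0 ≤ Winf c μ ν := by
    rw [Winf]
    refine le_csInf ⟨_, ⟨_, hplan0, rfl⟩⟩ ?_
    rintro r ⟨π', hπ', rfl⟩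
    exact linf_nonneg' hc π'
  set T := tcost (fun x y => c x y ^ p) π with hT
  have hT0 : 0 ≤ T :=
    tcost_nonneg' (fun x y => Real.rpow_nonneg (hc x y) p) hπn
  set t : ℝ := (T / α) ^ (1/p) with ht
  have hTα0 : 0 ≤ T / α := div_nonneg hT0 hαpos.le
  have ht0 : 0 ≤ t := Real.rpow_nonneg hTα0 _
  have htp : t ^ p = T / α := by
    rw [ht, ← Real.rpow_mul hTα0, one_div_mul_cancel (ne_of_gt hp0), Real.rpow_one]
  set G : X → X → Prop := fun x y => c x y ≤ t with hG
  suffices hWt : Winf c μ ν ≤ t by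
    have h1 : (Winf c μ ν) ^ p ≤ t ^ p := Real.rpow_le_rpow hW0 hWt hp0.le
    rw [htp] at h1
    have h2 : α * (Winf c μ ν) ^ p ≤ α * (T / α) :=
      mul_le_mul_of_nonneg_left h1 hαpos.le
    have h3 : α * (T / α) = T := by field_simp
    linarith
  by_cases hHall : ∀ A : Finset X, ∑ x ∈ A, μ x ≤ ∑ y ∈ NGs G A, ν y
  · obtain ⟨π', h1, h2, h3, h4⟩ := frac_hall μ ν G (fun x => (hμpos x).le)
      (fun y => (hνpos y).le) (by rw [hμ1, hν1]) hHall
    have hlf : linf c π' ≤ t := linf_le' ht0 (fun x y hne => h4 x y hne)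
    rw [Winf]
    have hbdd : BddBelow {r | ∃ π, IsPlan μ ν π ∧ linf c π = r} := by
      refine ⟨0, ?_⟩
      rintro r ⟨π'', hπ'', rfl⟩
      exact linf_nonneg' hc π''
    exact le_trans (csInf_le hbdd ⟨π', ⟨h1, h2, h3⟩, rfl⟩) hlf
  · exfalso
    push_neg at hHall
    obtain ⟨A, hA⟩ := hHall
    have hβ : 0 < ∑ x ∈ A, μ x - ∑ y ∈ NGs G A, ν y := by linarith
    have hαβ : α ≤ ∑ x ∈ A, μ x - ∑ y ∈ NGs G A, ν y := by
      rw [hα]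
      have hle := csInf_le (s := {r | ∃ A B : Finset X,
          r = |∑ x ∈ A, μ x - ∑ y ∈ B, ν y| ∧ 0 < r})
        ⟨0, by rintro r ⟨_, _, _, hr⟩; exact hr.le⟩
        (a := |∑ x ∈ A, μ x - ∑ y ∈ NGs G A, ν y|)
        ⟨A, NGs G A, rfl, abs_pos.mpr (ne_of_gt hβ)⟩
      rwa [abs_of_pos hβ] at hle
    have hinn : ∀ (x : X) (S : Finset X), 0 ≤ ∑ y ∈ S, π x y :=
      fun x S => Finset.sum_nonneg fun y _ => hπn x y
    have hsplitA : ∑ x ∈ A, μ x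
        = ∑ x ∈ A, ∑ y ∈ univ \ NGs G A, π x y + ∑ x ∈ A, ∑ y ∈ NGs G A, π x y := by
      rw [← Finset.sum_add_distrib]
      refine Finset.sum_congr rfl fun x _ => ?_
      rw [← hπr x]
      exact (Finset.sum_sdiff (subset_univ _)).symm
    have hcolb : ∑ x ∈ A, ∑ y ∈ NGs G A, π x y ≤ ∑ y ∈ NGs G A, ν y := by
      calc ∑ x ∈ A, ∑ y ∈ NGs G A, π x y
          ≤ ∑ x ∈ univ, ∑ y ∈ NGs G A, π x y :=
            Finset.sum_le_sum_of_subset_of_nonneg (subset_univ A)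
              (fun x _ _ => hinn x _)
        _ = ∑ y ∈ NGs G A, ∑ x ∈ univ, π x y := Finset.sum_comm
        _ = ∑ y ∈ NGs G A, ν y := Finset.sum_congr rfl fun y _ => hπc y
    have hmge : ∑ x ∈ A, μ x - ∑ y ∈ NGs G A, ν y
        ≤ ∑ x ∈ A, ∑ y ∈ univ \ NGs G A, π x y := by linarith
    have hcgt : ∀ x ∈ A, ∀ y ∈ univ \ NGs G A, t < c x y := by
      intro x hx y hy
      by_contra hle
      push_neg at hle
      exact (mem_sdiff.mp hy).2 (mem_NGs.mpr ⟨x, hx, hle⟩)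
    have hex : ∃ q ∈ A ×ˢ (univ \ NGs G A), 0 < π q.1 q.2 := by
      by_contra hno
      push_neg at hno
      have hzero : ∑ x ∈ A, ∑ y ∈ univ \ NGs G A, π x y = 0 := by
        rw [← Finset.sum_product']
        exact Finset.sum_eq_zero fun q hq => le_antisymm (hno q hq) (hπn q.1 q.2)
      linarith
    obtain ⟨q0, hq0mem, hq0pos⟩ := hex
    have hsum1 : ∑ q ∈ A ×ˢ (univ \ NGs G A), t ^ p * π q.1 q.2
        < ∑ q ∈ A ×ˢ (univ \ NGs G A), c q.1 q.2 ^ p * π q.1 q.2 := by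
      refine Finset.sum_lt_sum (fun q hq => ?_) ⟨q0, hq0mem, ?_⟩
      · obtain ⟨hq1, hq2⟩ := Finset.mem_product.mp hq
        exact mul_le_mul_of_nonneg_right
          (Real.rpow_le_rpow ht0 (hcgt _ hq1 _ hq2).le hp0.le) (hπn q.1 q.2)
      · obtain ⟨hq1, hq2⟩ := Finset.mem_product.mp hq0mem
        exact mul_lt_mul_of_pos_right
          (Real.rpow_lt_rpow ht0 (hcgt _ hq1 _ hq2) hp0) hq0pos
    have hLHS : ∑ q ∈ A ×ˢ (univ \ NGs G A), t ^ p * π q.1 q.2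
        = t ^ p * ∑ x ∈ A, ∑ y ∈ univ \ NGs G A, π x y := by
      rw [← Finset.sum_product']
      exact (Finset.mul_sum _ _ _).symm
    have hRHS : ∑ q ∈ A ×ˢ (univ \ NGs G A), c q.1 q.2 ^ p * π q.1 q.2 ≤ T := by
      have he : ∑ q ∈ A ×ˢ (univ \ NGs G A), c q.1 q.2 ^ p * π q.1 q.2
          = ∑ x ∈ A, ∑ y ∈ univ \ NGs G A, c x y ^ p * π x y :=
        Finset.sum_product' A (univ \ NGs G A) (fun x y => c x y ^ p * π x y)
      rw [he]
      calc ∑ x ∈ A, ∑ y ∈ univ \ NGs G A, c x y ^ p * π x y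
          ≤ ∑ x ∈ A, ∑ y ∈ univ, c x y ^ p * π x y :=
            Finset.sum_le_sum fun x _ =>
              Finset.sum_le_sum_of_subset_of_nonneg sdiff_subset
                (fun y _ _ => mul_nonneg (Real.rpow_nonneg (hc x y) p) (hπn x y))
        _ ≤ ∑ x ∈ univ, ∑ y ∈ univ, c x y ^ p * π x y :=
            Finset.sum_le_sum_of_subset_of_nonneg (subset_univ A)
              (fun x _ _ => Finset.sum_nonneg fun y _ =>
                mul_nonneg (Real.rpow_nonneg (hc x y) p) (hπn x y))
        _ = T := rfl
    have htpm : t ^ p * α ≤ t ^ p * ∑ x ∈ A, ∑ y ∈ univ \ NGs G A, π x y :=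
      mul_le_mul_of_nonneg_left (le_trans hαβ hmge) (Real.rpow_nonneg ht0 p)
    have hTeq : t ^ p * α = T := by
      rw [htp]
      field_simp
    linarith

end MainAux

/-- `α^{1/p} · W^{(∞)}_c ≤ W_{c^p}^{1/p}` for all `p ≥ 1`, hence the
liminf as `p → ∞` of the `p`-costs dominates the infinity cost. -/
theorem liminf_Wcp_ge_Winf {X : Type*} [Fintype X]
    (μ ν : X → ℝ) (c : X → X → ℝ)
    (hμpos : ∀ x, 0 < μ x) (hνpos : ∀ y, 0 < ν y)
    (hμ1 : ∑ x, μ x = 1) (hν1 : ∑ y, ν y = 1)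
    (hc : ∀ x y, 0 ≤ c x y)
    (α : ℝ)
    (hα : α = sInf {r | ∃ A B : Finset X,
      r = |∑ x ∈ A, μ x - ∑ y ∈ B, ν y| ∧ 0 < r})
    (hαpos : 0 < α) :
    (∀ p : ℝ, 1 ≤ p →
      α ^ (1 / p) * Winf c μ ν ≤ (Wc (fun x y => c x y ^ p) μ ν) ^ (1 / p)) ∧
    Winf c μ ν ≤
      Filter.liminf (fun p : ℝ => (Wc (fun x y => c x y ^ p) μ ν) ^ (1 / p))
        Filter.atTop := by
  classical
  have hXne : Nonempty X := by
    by_contra h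
    rw [not_nonempty_iff] at h
    rw [Finset.univ_eq_empty, Finset.sum_empty] at hμ1
    exact absurd hμ1 (by norm_num)
  obtain ⟨x0⟩ := hXne
  haveI : Nonempty X := ⟨x0⟩
  have hplan0 : IsPlan μ ν (fun x y => μ x * ν y) :=
    isPlan_prod μ ν (fun x => (hμpos x).le) (fun y => (hνpos y).le) hμ1 hν1
  have hW0 : 0 ≤ Winf c μ ν := by
    rw [Winf]
    refine le_csInf ⟨_, ⟨_, hplan0, rfl⟩⟩ ?_
    rintro r ⟨π', hπ', rfl⟩
    exact linf_nonneg' hc π'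
  have hpart1 : ∀ p : ℝ, 1 ≤ p →
      α ^ (1 / p) * Winf c μ ν ≤ (Wc (fun x y => c x y ^ p) μ ν) ^ (1 / p) := by
    intro p hp
    have hp0 : (0:ℝ) < p := lt_of_lt_of_le one_pos hp
    have hWcge : α * (Winf c μ ν) ^ p ≤ Wc (fun x y => c x y ^ p) μ ν := by
      rw [Wc]
      refine le_csInf ⟨_, ⟨_, hplan0, rfl⟩⟩ ?_
      rintro r ⟨π, hπ, rfl⟩
      exact key_bound μ ν c hμpos hνpos hμ1 hν1 hc α hα hαpos p hp π hπ
    have h0 : 0 ≤ α * (Winf c μ ν) ^ p :=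
      mul_nonneg hαpos.le (Real.rpow_nonneg hW0 p)
    have h1 := Real.rpow_le_rpow h0 hWcge (by positivity : (0:ℝ) ≤ 1/p)
    calc α ^ (1/p) * Winf c μ ν = (α * (Winf c μ ν) ^ p) ^ (1/p) := by
          rw [Real.mul_rpow hαpos.le (Real.rpow_nonneg hW0 p),
            ← Real.rpow_mul hW0, mul_one_div_cancel (ne_of_gt hp0), Real.rpow_one]
      _ ≤ _ := h1
  refine ⟨hpart1, ?_⟩
  -- uniform upper bound on the p-costs
  have hbne : ((univ : Finset (X × X)).image (fun q => c q.1 q.2)).Nonempty :=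
    Finset.univ_nonempty.image _
  set b : ℝ := ((univ : Finset (X × X)).image (fun q => c q.1 q.2)).max' hbne with hb
  have hbc : ∀ x y, c x y ≤ b := by
    intro x y
    rw [hb]
    exact Finset.le_max' _ (c x y)
      (Finset.mem_image_of_mem (fun q : X × X => c q.1 q.2) (mem_univ (x, y)))
  have hb0 : 0 ≤ b := le_trans (hc x0 x0) (hbc x0 x0)
  have hWcbdd : ∀ p : ℝ, BddBelow {r | ∃ π, IsPlan μ ν π ∧
      tcost (fun x y => c x y ^ p) π = r} := by
    intro p
    refine ⟨0, ?_⟩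
    rintro r ⟨π, hπ, rfl⟩
    exact tcost_nonneg' (fun x y => Real.rpow_nonneg (hc x y) p) hπ.1
  have hgb : ∀ p : ℝ, 1 ≤ p → (Wc (fun x y => c x y ^ p) μ ν) ^ (1/p) ≤ b := by
    intro p hp
    have hp0 : (0:ℝ) < p := lt_of_lt_of_le one_pos hp
    have hWc0 : 0 ≤ Wc (fun x y => c x y ^ p) μ ν := by
      rw [Wc]
      refine le_csInf ⟨_, ⟨_, hplan0, rfl⟩⟩ ?_
      rintro r ⟨π, hπ, rfl⟩
      exact tcost_nonneg' (fun x y => Real.rpow_nonneg (hc x y) p) hπ.1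
    have htc : tcost (fun x y => c x y ^ p) (fun x y => μ x * ν y) ≤ b ^ p := by
      unfold tcost
      calc ∑ x, ∑ y, c x y ^ p * (μ x * ν y)
          ≤ ∑ x, ∑ y, b ^ p * (μ x * ν y) := by
            refine Finset.sum_le_sum fun x _ => Finset.sum_le_sum fun y _ => ?_
            exact mul_le_mul_of_nonneg_right
              (Real.rpow_le_rpow (hc x y) (hbc x y) hp0.le)
              (mul_nonneg (hμpos x).le (hνpos y).le)
        _ = ∑ x, b ^ p * μ x := by
            refine Finset.sum_congr rfl fun x _ => ?_
            rw [← Finset.mul_sum, ← Finset.mul_sum, hν1, mul_one]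
        _ = b ^ p * ∑ x, μ x := (Finset.mul_sum _ _ _).symm
        _ = b ^ p := by rw [hμ1, mul_one]
    have hWcb : Wc (fun x y => c x y ^ p) μ ν ≤ b ^ p := by
      rw [Wc]
      exact le_trans (csInf_le (hWcbdd p) ⟨_, hplan0, rfl⟩) htc
    calc (Wc (fun x y => c x y ^ p) μ ν) ^ (1/p)
        ≤ (b ^ p) ^ (1/p) := Real.rpow_le_rpow hWc0 hWcb (by positivity)
      _ = b := by
          rw [← Real.rpow_mul hb0, mul_one_div_cancel (ne_of_gt hp0), Real.rpow_one]
  have h1 : Filter.Tendsto (fun p : ℝ => 1/p) Filter.atTop (nhds 0) := by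
    simpa [one_div] using tendsto_inv_atTop_zero (𝕜 := ℝ)
  have h2 : Filter.Tendsto (fun p : ℝ => α ^ (1/p)) Filter.atTop (nhds 1) := by
    have hcont : ContinuousAt (fun s : ℝ => α ^ s) 0 :=
      Real.continuousAt_const_rpow (ne_of_gt hαpos)
    have := hcont.tendsto.comp h1
    simpa [Real.rpow_zero, Function.comp_def] using this
  have hf : Filter.Tendsto (fun p : ℝ => α ^ (1/p) * Winf c μ ν) Filter.atTop
      (nhds (Winf c μ ν)) := by
    simpa using h2.mul_const (Winf c μ ν)
  have hlim : Filter.liminf (fun p : ℝ => α ^ (1/p) * Winf c μ ν) Filter.atTop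
      = Winf c μ ν := hf.liminf_eq
  have hev : ∀ᶠ (p : ℝ) in Filter.atTop, α ^ (1/p) * Winf c μ ν
      ≤ (Wc (fun x y => c x y ^ p) μ ν) ^ (1/p) :=
    (Filter.eventually_ge_atTop 1).mono fun p hp => hpart1 p hp
  have hbddf : Filter.IsBoundedUnder (· ≥ ·) Filter.atTop
      (fun p : ℝ => α ^ (1/p) * Winf c μ ν) := hf.isBoundedUnder_ge
  have hcobg : Filter.IsCoboundedUnder (· ≥ ·) Filter.atTop
      (fun p : ℝ => (Wc (fun x y => c x y ^ p) μ ν) ^ (1/p)) := by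
    apply Filter.IsBoundedUnder.isCoboundedUnder_ge
    exact ⟨b, Filter.eventually_map.mpr
      ((Filter.eventually_ge_atTop 1).mono fun p hp => hgb p hp)⟩
  have hfin := Filter.liminf_le_liminf hev hbddf hcobg
  rwa [hlim] at hfin
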